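/- Fix L > 0, s ∈ ℤ', and σ : ℤ' → [0,1] with Σ_{l<0} σ(l) < ∞. If Y solves the discrete Riemann–Hilbert problem with data W (conditions (a), (b), (c) below), then det Y(z) = 1 for all z ∈ ℂ \ ℤ'. -/

import Mathlib

open scoped Topology

/-!
Half-integers `ℤ' = ℤ + 1/2` are parametrized by `ℤ`: the half-integer `a = m + 1/2`
corresponds to `m : ℤ`; `σ : ℤ' → [0,1]` is represented as `σ : ℤ → ℝ` and `s = t + 1/2` by
`t : ℤ`.  Thus `σ(a - s - 1/2)` reads `σ (m - t - 1)`, `J_{a-1/2} = J_m`, `J_{a+1/2} = J_{m+1}`,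
and `K^Be(a,a) = ∑_{j≥0} J_{m+j+1}(2L)²`.  Holomorphy, analyticity and the decay condition for
matrix-valued functions are expressed entrywise (any matrix norm gives an equivalent
formulation).
-/
noncomputable def besselJnat (L : ℝ) (n : ℕ) : ℝ :=
  ∑' j : ℕ, (-1 : ℝ) ^ j * L ^ (2 * j + n) / (Nat.factorial j * Nat.factorial (n + j))

noncomputable def besselJint (L : ℝ) (n : ℤ) : ℝ :=
  if 0 ≤ n then besselJnat L n.toNat else (-1 : ℝ) ^ (-n).toNat * besselJnat L (-n).toNat

/-- Diagonal of the discrete Bessel kernel, `K^Be(m + 1/2, m + 1/2)`. -/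
noncomputable def KBeDiag (L : ℝ) (m : ℤ) : ℝ :=
  ∑' j : ℕ, besselJint L (m + j + 1) * besselJint L (m + j + 1)

/-- `f(a) = √σ(a-s-1/2) (J_{a-1/2}(2L), L J_{a+1/2}(2L))ᵀ` for `a = m + 1/2`. -/
noncomputable def fvec (σ : ℤ → ℝ) (L : ℝ) (t m : ℤ) : Fin 2 → ℝ :=
  ![Real.sqrt (σ (m - t - 1)) * besselJint L m,
    Real.sqrt (σ (m - t - 1)) * (L * besselJint L (m + 1))]

/-- `g(a) = √σ(a-s-1/2) (L J_{a+1/2}(2L), -J_{a-1/2}(2L))ᵀ` for `a = m + 1/2`. -/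
noncomputable def gvec (σ : ℤ → ℝ) (L : ℝ) (t m : ℤ) : Fin 2 → ℝ :=
  ![Real.sqrt (σ (m - t - 1)) * (L * besselJint L (m + 1)),
    Real.sqrt (σ (m - t - 1)) * (-besselJint L m)]

/-- `W(a) = f(a) g(a)ᵀ / (1 - σ(a-s-1/2) K^Be(a,a))` for `a = m + 1/2`. -/
noncomputable def Wmat (σ : ℤ → ℝ) (L : ℝ) (t m : ℤ) : Matrix (Fin 2) (Fin 2) ℂ :=
  fun i j => ((fvec σ L t m i * gvec σ L t m j / (1 - σ (m - t - 1) * KBeDiag L m) : ℝ) : ℂ)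

/-- `Y` solves the discrete Riemann–Hilbert problem with data `W`:
(a) `Y` is holomorphic on `ℂ \ ℤ'`;
(b) for every `a ∈ ℤ'`, `z ↦ Y(z)(I - W(a)/(z-a))` extends holomorphically near `a`;
(c) `sup_{|z|=n} |Y(z) - I| → 0` as `n → ∞` through positive integers. -/
def SolvesRH (W : ℤ → Matrix (Fin 2) (Fin 2) ℂ) (Y : ℂ → Matrix (Fin 2) (Fin 2) ℂ) : Prop :=
  (∀ i j, DifferentiableOn ℂ (fun z => Y z i j) {z : ℂ | ∀ m : ℤ, z ≠ (m : ℂ) + 1 / 2}) ∧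
  (∀ m : ℤ, ∃ h : ℂ → Matrix (Fin 2) (Fin 2) ℂ,
      (∀ i j, AnalyticAt ℂ (fun z => h z i j) ((m : ℂ) + 1 / 2)) ∧
      ∀ᶠ z in 𝓝[≠] ((m : ℂ) + 1 / 2),
        h z = Y z * (1 - (z - ((m : ℂ) + 1 / 2))⁻¹ • W m)) ∧
  (∀ ε : ℝ, 0 < ε → ∃ N : ℕ, 0 < N ∧ ∀ n : ℕ, N ≤ n → ∀ z : ℂ, ‖z‖ = n →
      ∀ i j, ‖(Y z - 1) i j‖ < ε)


lemma detW_aux (σ : ℤ → ℝ) (L : ℝ) (t m : ℤ) (c : ℂ) :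
    ((1 : Matrix (Fin 2) (Fin 2) ℂ) - c • Wmat σ L t m).det = 1 := by
  simp only [Matrix.det_fin_two, Matrix.sub_apply, Matrix.smul_apply, Matrix.one_apply, Wmat,
    fvec, gvec, Matrix.cons_val_zero, Matrix.cons_val_one, Matrix.head_cons,
    if_pos rfl, Fin.zero_eq_one_iff, Fin.one_eq_zero_iff]
  norm_num
  ring

/-- The set of half-integers in `ℂ` is closed. -/
lemma halfint_closed : IsClosed (Set.range (fun m : ℤ => (m : ℂ) + 1 / 2)) := by
  have h1 : Topology.IsClosedEmbedding (fun m : ℤ => (m : ℂ) + 1 / 2) := by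
    have e1 : Topology.IsClosedEmbedding ((↑) : ℝ → ℂ) :=
      Complex.isUniformEmbedding_ofReal.isClosedEmbedding
    have e2 : Topology.IsClosedEmbedding (fun z : ℂ => z + 1 / 2) :=
      (Homeomorph.addRight (1 / 2 : ℂ)).isClosedEmbedding
    have h3 := (e2.comp e1).comp Int.isClosedEmbedding_coe_real
    have h4 : (fun m : ℤ => (m : ℂ) + 1 / 2) =
        (fun z : ℂ => z + 1 / 2) ∘ ((↑) : ℝ → ℂ) ∘ ((↑) : ℤ → ℝ) := by
      funext m; simp [Function.comp]
    rw [h4]; exact h3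
  exact h1.isClosed_range

/-- Points on a circle of positive integer radius are not half-integers. -/
lemma sphere_not_halfint (n : ℕ) (z : ℂ) (hz : ‖z‖ = n) (m : ℤ) :
    z ≠ (m : ℂ) + 1 / 2 := by
  rintro rfl
  have h1 : ‖(m : ℂ) + 1 / 2‖ = |(m : ℝ) + 1 / 2| := by
    rw [show ((m : ℂ) + 1 / 2) = (((m : ℝ) + 1 / 2 : ℝ) : ℂ) by push_cast; ring,
      Complex.norm_real, Real.norm_eq_abs]
  rw [h1] at hz
  rcases abs_cases ((m : ℝ) + 1 / 2) with ⟨h, _⟩ | ⟨h, _⟩ <;> rw [h] at hz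
  · have : ((2 * m + 1 : ℤ) : ℝ) = ((2 * n : ℤ) : ℝ) := by push_cast; linarith
    have := Int.cast_injective (α := ℝ) this
    omega
  · have : ((2 * m + 1 : ℤ) : ℝ) = ((-(2 * n) : ℤ) : ℝ) := by push_cast; linarith
    have := Int.cast_injective (α := ℝ) this
    omega

/-- Near a half-integer `m + 1/2`, punctured, there are no half-integers. -/
lemma near_halfint (m : ℤ) (z : ℂ) (hz : z ≠ (m : ℂ) + 1 / 2)
    (hd : ‖z - ((m : ℂ) + 1 / 2)‖ < 1) (m' : ℤ) : z ≠ (m' : ℂ) + 1 / 2 := by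
  rintro rfl
  rcases eq_or_ne m' m with rfl | hne
  · exact hz rfl
  · have h1 : ((m' : ℂ) + 1 / 2) - ((m : ℂ) + 1 / 2) = ((m' - m : ℤ) : ℂ) := by push_cast; ring
    rw [h1, Complex.norm_intCast] at hd
    have : (1 : ℝ) ≤ |((m' - m : ℤ) : ℝ)| := by
      rw [← Int.cast_abs]
      exact_mod_cast Int.one_le_abs (by omega)
    linarith

/-- any solution of the discrete Riemann–Hilbert problem with data `W` has
unit determinant on `ℂ \ ℤ'`. -/
theorem discreteRH_det_one (σ : ℤ → ℝ) (hσ : ∀ k : ℤ, σ k ∈ Set.Icc (0 : ℝ) 1)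
    (hsum : Summable (fun k : {k : ℤ // k < 0} => σ k)) (L : ℝ) (hL : 0 < L) (t : ℤ)
    (Y : ℂ → Matrix (Fin 2) (Fin 2) ℂ) (hY : SolvesRH (Wmat σ L t) Y) :
    ∀ z : ℂ, (∀ m : ℤ, z ≠ (m : ℂ) + 1 / 2) → Matrix.det (Y z) = 1 := by
  classical
  obtain ⟨ha, hb, hc⟩ := hY
  choose h hh1 hh2 using hb
  set U : Set ℂ := {z : ℂ | ∀ m : ℤ, z ≠ (m : ℂ) + 1 / 2} with hU
  have hUopen : IsOpen U := by
    have : U = (Set.range (fun m : ℤ => (m : ℂ) + 1 / 2))ᶜ := by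
      ext z
      simp only [hU, Set.mem_setOf_eq, Set.mem_compl_iff, Set.mem_range, not_exists]
      exact ⟨fun H m hm => H m hm.symm, fun H m hm => H m hm.symm⟩
    rw [this]
    exact halfint_closed.isOpen_compl
  -- entire extension of det Y
  set G : ℂ → ℂ := fun z =>
    if hz : ∃ m : ℤ, z = (m : ℂ) + 1 / 2 then (h hz.choose z).det else (Y z).det with hG
  have hGU : ∀ z ∈ U, G z = (Y z).det := by
    intro z hzU
    have : ¬∃ m : ℤ, z = (m : ℂ) + 1 / 2 := by
      rintro ⟨m, rfl⟩; exact hzU m rfl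
    simp only [hG]
    rw [dif_neg this]
  -- differentiability of det Y on U
  have hdetY : DifferentiableOn ℂ (fun z => (Y z).det) U := by
    have : (fun z => (Y z).det) =
        fun z => Y z 0 0 * Y z 1 1 - Y z 0 1 * Y z 1 0 := by
      funext z; exact Matrix.det_fin_two (Y z)
    rw [this]
    exact ((ha 0 0).mul (ha 1 1)).sub ((ha 0 1).mul (ha 1 0))
  -- near half-integer m + 1/2, G agrees with det (h m ·)
  have hGh : ∀ m : ℤ, G =ᶠ[𝓝 ((m : ℂ) + 1 / 2)] fun z => (h m z).det := by
    intro m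
    set a : ℂ := (m : ℂ) + 1 / 2 with haa
    have hball : ∀ᶠ z in 𝓝 a, ‖z - a‖ < 1 := by
      have : Metric.ball a 1 ∈ 𝓝 a := Metric.ball_mem_nhds a one_pos
      filter_upwards [this] with z hz
      simpa [Complex.dist_eq] using hz
    have hev := eventually_nhdsWithin_iff.mp (hh2 m)
    filter_upwards [hball, hev] with z hz1 hz2
    by_cases hza : z = a
    · -- at the point itself
      have hex : ∃ m' : ℤ, z = (m' : ℂ) + 1 / 2 := ⟨m, by rw [hza]⟩
      have hch : hex.choose = m := by
        have h1 := hex.choose_spec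
        have h2 : ((hex.choose : ℂ)) = (m : ℂ) := by
          have h3 : (hex.choose : ℂ) + 1 / 2 = (m : ℂ) + 1 / 2 := by
            rw [← h1, hza]
          exact add_right_cancel h3
        exact_mod_cast h2
      simp only [hG]
      rw [dif_pos hex, hch]
    · have hzU : z ∈ U := fun m' => near_halfint m z hza hz1 m'
      have hmem : z ∈ ({a}ᶜ : Set ℂ) := hza
      rw [hGU z hzU, hz2 hmem]
      rw [Matrix.det_mul, detW_aux, mul_one]
  -- G is entire
  have hGdiff : Differentiable ℂ G := by
    intro z
    by_cases hz : ∃ m : ℤ, z = (m : ℂ) + 1 / 2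
    · obtain ⟨m, rfl⟩ := hz
      have hanal : AnalyticAt ℂ (fun w => (h m w).det) ((m : ℂ) + 1 / 2) := by
        have : (fun w => (h m w).det) =
            fun w => h m w 0 0 * h m w 1 1 - h m w 0 1 * h m w 1 0 := by
          funext w; exact Matrix.det_fin_two (h m w)
        rw [this]
        exact ((hh1 m 0 0).mul (hh1 m 1 1)).sub ((hh1 m 0 1).mul (hh1 m 1 0))
      exact (hanal.congr (hGh m).symm).differentiableAt
    · push_neg at hz
      have hzU : z ∈ U := hz
      have h1 : DifferentiableAt ℂ (fun w => (Y w).det) z :=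
        hdetY.differentiableAt (hUopen.mem_nhds hzU)
      apply h1.congr_of_eventuallyEq
      filter_upwards [hUopen.mem_nhds hzU] with w hw
      exact hGU w hw
  -- G z = 1 everywhere, by the maximum principle and decay
  have hG1 : ∀ z : ℂ, G z = 1 := by
    intro z
    have key : ∀ ε : ℝ, 0 < ε → ‖G z - 1‖ ≤ ε := by
      intro ε hε
      set ε' : ℝ := min (ε / 4) 1 with hε'
      have hε'pos : 0 < ε' := lt_min (by linarith) one_pos
      obtain ⟨N, hNpos, hN⟩ := hc ε' hε'pos
      set n : ℕ := max N (⌊‖z‖⌋₊ + 1) with hn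
      have hnN : N ≤ n := le_max_left _ _
      have hnpos : (0 : ℝ) < n := by
        have : 0 < n := lt_of_lt_of_le hNpos hnN
        exact_mod_cast this
      have hzmem : z ∈ closure (Metric.ball (0 : ℂ) n) := by
        apply subset_closure
        simp only [Metric.mem_ball, Complex.dist_eq, sub_zero]
        calc ‖z‖ < ⌊‖z‖⌋₊ + 1 := Nat.lt_floor_add_one _
          _ ≤ n := by exact_mod_cast le_max_right N (⌊‖z‖⌋₊ + 1)
      have hfr : frontier (Metric.ball (0 : ℂ) n) = Metric.sphere (0 : ℂ) n :=
        frontier_ball 0 (ne_of_gt hnpos)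
      have hbd : ∀ w ∈ frontier (Metric.ball (0 : ℂ) n), ‖G w - 1‖ ≤ ε := by
        intro w hw
        rw [hfr] at hw
        have habsw : ‖w‖ = n := by
          simpa [Complex.dist_eq, sub_zero] using hw
        have hwU : w ∈ U := fun m => sphere_not_halfint n w habsw m
        have hGw : G w = (Y w).det := hGU w hwU
        have hA := hN n hnN w habsw
        -- entrywise bounds
        have hAij : ∀ i j, ‖Y w i j - (1 : Matrix (Fin 2) (Fin 2) ℂ) i j‖ < ε' := by
          intro i j
          have := hA i j
          simpa [Matrix.sub_apply] using this
        have h00 := hAij 0 0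
        have h01 := hAij 0 1
        have h10 := hAij 1 0
        have h11 := hAij 1 1
        simp only [Matrix.one_apply, if_pos rfl, Fin.zero_eq_one_iff, Fin.one_eq_zero_iff] at h00 h01 h10 h11
        norm_num at h00 h01 h10 h11
        have hdet : (Y w).det - 1 =
            (Y w 0 0 - 1) + (Y w 1 1 - 1) + (Y w 0 0 - 1) * (Y w 1 1 - 1)
              - (Y w 0 1) * (Y w 1 0) := by
          rw [Matrix.det_fin_two]; ring
        rw [hGw, show ‖(Y w).det - 1‖ = ‖(Y w).det - 1‖ from rfl, hdet]
        have hε'le1 : ε' ≤ 1 := min_le_right _ _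
        have hε'le : ε' ≤ ε / 4 := min_le_left _ _
        calc ‖(Y w 0 0 - 1) + (Y w 1 1 - 1) + (Y w 0 0 - 1) * (Y w 1 1 - 1)
              - (Y w 0 1) * (Y w 1 0)‖
            ≤ ‖(Y w 0 0 - 1) + (Y w 1 1 - 1) + (Y w 0 0 - 1) * (Y w 1 1 - 1)‖
              + ‖(Y w 0 1) * (Y w 1 0)‖ := by
              exact norm_sub_le _ _
          _ ≤ ‖(Y w 0 0 - 1) + (Y w 1 1 - 1)‖
              + ‖(Y w 0 0 - 1) * (Y w 1 1 - 1)‖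
              + ‖(Y w 0 1) * (Y w 1 0)‖ := by
              have := norm_add_le ((Y w 0 0 - 1) + (Y w 1 1 - 1))
                ((Y w 0 0 - 1) * (Y w 1 1 - 1))
              linarith
          _ ≤ (‖Y w 0 0 - 1‖ + ‖Y w 1 1 - 1‖)
              + ‖Y w 0 0 - 1‖ * ‖Y w 1 1 - 1‖
              + ‖Y w 0 1‖ * ‖Y w 1 0‖ := by
              have h1 := norm_add_le (Y w 0 0 - 1) (Y w 1 1 - 1)
              rw [norm_mul, norm_mul]
              linarith
          _ ≤ ε' + ε' + ε' * 1 + ε' * 1 := by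
              have e1 : ‖Y w 0 0 - 1‖ * ‖Y w 1 1 - 1‖ ≤ ε' * 1 := by
                apply mul_le_mul (le_of_lt h00) (le_trans (le_of_lt h11) hε'le1)
                  (norm_nonneg _) (le_of_lt hε'pos)
              have e2 : ‖Y w 0 1‖ * ‖Y w 1 0‖ ≤ ε' * 1 := by
                apply mul_le_mul (le_of_lt h01) (le_trans (le_of_lt h10) hε'le1)
                  (norm_nonneg _) (le_of_lt hε'pos)
              linarith
          _ ≤ ε := by linarith
      have := Complex.norm_le_of_forall_mem_frontier_norm_le (Metric.isBounded_ball)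
        ((hGdiff.sub (differentiable_const 1)).diffContOnCl) hbd hzmem
      simpa using this
    have h0 : ‖G z - 1‖ = 0 := by
      by_contra h0
      have hpos : 0 < ‖G z - 1‖ :=
        lt_of_le_of_ne (norm_nonneg _) (Ne.symm h0)
      linarith [key (‖G z - 1‖ / 2) (by linarith)]
    exact sub_eq_zero.mp (norm_eq_zero.mp h0)
  intro z hz
  rw [← hGU z hz]
  exact hG1 z
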